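/- Let μ be a (d,τ)-nice probability measure on ℝ^m and let A be a σ-dictionary with columns a¹, …, a^m ∈ ℝⁿ. Then there exist sum-of-squares polynomials S₁, S₂ ∈ ℝ[u₁,…,u_n] such that for every u ∈ ℝⁿ: E_{x∼μ}⟨Ax, u⟩^d = Σ_{i=1}^m ⟨aⁱ,u⟩^d + S₁(u), and Σ_{i=1}^m ⟨aⁱ,u⟩^d + τ·σ^d·d^d·‖u‖₂^d = E_{x∼μ}⟨Ax, u⟩^d + S₂(u). In particular ‖Aᵀu‖_d^d ≤ E_{x∼μ}⟨Ax, u⟩^d ≤ ‖Aᵀu‖_d^d + τ σ^d d^d ‖u‖₂^d for all u ∈ ℝⁿ. -/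

import Mathlib

open MvPolynomial MeasureTheory

/-- A polynomial is a sum of squares if it is a finite sum of squares of polynomials. -/
def IsSOS {σ : Type*} (p : MvPolynomial σ ℝ) : Prop :=
  ∃ (r : ℕ) (q : Fin r → MvPolynomial σ ℝ), p = ∑ i, q i ^ 2

namespace IsSOS
variable {σ : Type*} {p q : MvPolynomial σ ℝ}
lemma zero : IsSOS (0 : MvPolynomial σ ℝ) := ⟨0, fun i => 0, by simp⟩
lemma sq (q : MvPolynomial σ ℝ) : IsSOS (q ^ 2) := ⟨1, fun _ => q, by simp⟩
lemma add (hp : IsSOS p) (hq : IsSOS q) : IsSOS (p + q) := by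
  obtain ⟨r, f, rfl⟩ := hp
  obtain ⟨s, g, rfl⟩ := hq
  exact ⟨r + s, Fin.append f g, by
    rw [Fin.sum_univ_add]
    simp [Fin.append_left, Fin.append_right]⟩
lemma finsum {ι : Type*} (s : Finset ι) (f : ι → MvPolynomial σ ℝ)
    (h : ∀ i ∈ s, IsSOS (f i)) : IsSOS (∑ i ∈ s, f i) := by
  induction s using Finset.cons_induction with
  | empty => simpa using zero
  | cons a s ha ih =>
    rw [Finset.sum_cons]
    exact add (h a (Finset.mem_cons_self a s)) (ih fun i hi => h i (Finset.mem_cons_of_mem hi))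
lemma of_sum_sq {ι : Type*} (s : Finset ι) (f : ι → MvPolynomial σ ℝ) :
    IsSOS (∑ i ∈ s, f i ^ 2) :=
  finsum s _ fun i _ => sq (f i)
lemma mul (hp : IsSOS p) (hq : IsSOS q) : IsSOS (p * q) := by
  obtain ⟨r, f, rfl⟩ := hp
  obtain ⟨s, g, rfl⟩ := hq
  rw [Finset.sum_mul_sum]
  have : ∀ i, ∑ j, f i ^ 2 * g j ^ 2 = ∑ j, (f i * g j) ^ 2 := by
    intro i; exact Finset.sum_congr rfl fun j _ => (mul_pow _ _ _).symm
  simp_rw [this]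
  rw [← Finset.sum_product']
  exact of_sum_sq _ _
lemma pow (hp : IsSOS p) (k : ℕ) : IsSOS (p ^ k) := by
  induction k with
  | zero => simpa using sq (1 : MvPolynomial σ ℝ)
  | succ k ih => rw [pow_succ]; exact ih.mul hp
lemma const_mul {c : ℝ} (hc : 0 ≤ c) (hp : IsSOS p) : IsSOS (C c * p) := by
  obtain ⟨r, f, rfl⟩ := hp
  refine ⟨r, fun i => C (Real.sqrt c) * f i, ?_⟩
  rw [Finset.mul_sum]
  refine Finset.sum_congr rfl fun i _ => ?_
  rw [mul_pow, ← map_pow, Real.sq_sqrt hc]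
lemma eval_nonneg (hp : IsSOS p) (u : σ → ℝ) : 0 ≤ eval u p := by
  obtain ⟨r, f, rfl⟩ := hp
  rw [map_sum]
  exact Finset.sum_nonneg fun i _ => by rw [map_pow]; positivity
end IsSOS

lemma quad_expand {n m : ℕ} (c : Fin m → Fin n → ℝ) (x : Fin n → ℝ) :
    ∑ i, (∑ j, c i j * x j) ^ 2 = ∑ p, ∑ q, (∑ i, c i p * c i q) * (x p * x q) := by
  have : ∀ i : Fin m, (∑ j, c i j * x j) ^ 2 = ∑ p, ∑ q, (c i p * c i q) * (x p * x q) := by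
    intro i
    rw [sq, Finset.sum_mul_sum]
    exact Finset.sum_congr rfl fun p _ => Finset.sum_congr rfl fun q _ => by ring
  simp_rw [this, Finset.sum_comm (s := Finset.univ) (t := Finset.univ)
    (f := fun i p => ∑ q, (c i p * c i q) * (x p * x q))]
  refine Finset.sum_congr rfl fun p _ => ?_
  rw [Finset.sum_comm]
  refine Finset.sum_congr rfl fun q _ => ?_
  rw [Finset.sum_mul]

lemma exists_sos_quadratic {n m : ℕ} (σ : ℝ) (a : Fin m → Fin n → ℝ)
    (hdict : ∀ u : Fin n → ℝ, ∑ i, (∑ j, a i j * u j) ^ 2 ≤ σ * ∑ j, u j ^ 2) :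
    IsSOS ((C σ * ∑ j, (X j : MvPolynomial (Fin n) ℝ) ^ 2) - ∑ i, (∑ j, C (a i j) * X j) ^ 2) := by
  classical
  set Q : Matrix (Fin n) (Fin n) ℝ :=
    Matrix.of (fun p q => σ * (if p = q then 1 else 0) - ∑ i, a i p * a i q) with hQdef
  have hQentry : ∀ p q, Q p q = σ * (if p = q then 1 else 0) - ∑ i, a i p * a i q := by
    intro p q; rfl
  have hquad : ∀ x : Fin n → ℝ,
      dotProduct (star x) (Q.mulVec x) = σ * ∑ j, x j ^ 2 - ∑ i, (∑ j, a i j * x j) ^ 2 := by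
    intro x
    have h1 : dotProduct (star x) (Q.mulVec x) = ∑ p, ∑ q, Q p q * (x p * x q) := by
      simp only [dotProduct, Matrix.mulVec, Pi.star_apply, star_trivial, Finset.mul_sum]
      exact Finset.sum_congr rfl fun p _ => Finset.sum_congr rfl fun q _ => by ring
    rw [h1]
    simp_rw [hQentry, sub_mul, Finset.sum_sub_distrib]
    rw [quad_expand a x]
    congr 1
    have : ∀ p : Fin n, ∑ q, σ * (if p = q then 1 else 0) * (x p * x q) = σ * x p ^ 2 := by
      intro p
      rw [Finset.sum_eq_single p (fun q _ hq => by simp [Ne.symm hq]) (by simp)]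
      simp [sq]
    simp_rw [this, Finset.mul_sum]
  have hQpsd : Q.PosSemidef := by
    refine Matrix.PosSemidef.of_dotProduct_mulVec_nonneg ?_ ?_
    · ext p q
      simp only [Matrix.conjTranspose_apply, star_trivial, hQentry]
      have : (if q = p then (1:ℝ) else 0) = (if p = q then 1 else 0) := by
        by_cases h : p = q <;> simp [h, Ne.symm, eq_comm]
      rw [this]
      congr 1
      exact Finset.sum_congr rfl fun i _ => by ring
    · intro x
      rw [hquad]
      have := hdict x
      linarith
  obtain ⟨R, hRQ⟩ : ∃ R : Matrix (Fin n) (Fin n) ℝ, Q = star R * R := by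
    open scoped MatrixOrder in
    exact CStarAlgebra.nonneg_iff_eq_star_mul_self.mp hQpsd.nonneg
  have hRR : ∀ p q, ∑ i, R i p * R i q = Q p q := by
    intro p q
    rw [hRQ, Matrix.mul_apply]
    simp [Matrix.star_apply]
  refine ⟨n, fun p => ∑ j, C (R p j) * X j, ?_⟩
  apply MvPolynomial.funext
  intro x
  simp only [map_sub, map_mul, map_sum, map_pow, eval_C, eval_X]
  rw [quad_expand R x, quad_expand a x]
  simp_rw [hRR]
  have hσ : σ * ∑ j, x j ^ 2 = ∑ p, ∑ q, σ * (if p = q then 1 else 0) * (x p * x q) := by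
    have : ∀ p : Fin n, ∑ q, σ * (if p = q then 1 else 0) * (x p * x q) = σ * x p ^ 2 := by
      intro p
      rw [Finset.sum_eq_single p (fun q _ hq => by simp [Ne.symm hq]) (by simp)]
      simp [sq]
    simp_rw [this, Finset.mul_sum]
  rw [hσ, ← Finset.sum_sub_distrib]
  refine Finset.sum_congr rfl fun p _ => ?_
  rw [← Finset.sum_sub_distrib]
  refine Finset.sum_congr rfl fun q _ => ?_
  rw [hQentry]
  ring


/-- For a `(d,τ)`-nice probability measure `μ` on `ℝ^m` and a `σ`-dictionary with columns
`a 1, …, a m`, there are sums of squares `S₁, S₂` with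
`E_μ ⟨Ax,u⟩^d = ‖Aᵀu‖_d^d + S₁(u)` and `‖Aᵀu‖_d^d + τ σ^d d^d ‖u‖₂^d = E_μ ⟨Ax,u⟩^d + S₂(u)`;
in particular `‖Aᵀu‖_d^d ≤ E_μ ⟨Ax,u⟩^d ≤ ‖Aᵀu‖_d^d + τ σ^d d^d ‖u‖₂^d` for every `u`. -/
theorem stmt6 (n m d : ℕ) (hde : Even d) (hd2 : 2 ≤ d)
    (τ : ℝ) (hτ0 : 0 < τ) (hτ1 : τ < 1) (σ : ℝ) (hσ : 1 ≤ σ)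
    (μ : Measure (Fin m → ℝ)) [IsProbabilityMeasure μ]
    (hint : ∀ α : Fin m → ℕ, (∑ k, α k) ≤ d →
      Integrable (fun x => ∏ k, x k ^ α k) μ)
    (hmom1 : ∀ i, ∫ x, x i ^ d ∂μ = 1)
    (hmom2 : ∀ α : Fin m → ℕ, (∑ k, α k) = d → (∀ k, Even (α k)) →
      (∀ i, α ≠ fun k => if k = i then d else 0) →
      0 ≤ (∫ x, ∏ k, x k ^ α k ∂μ) ∧ (∫ x, ∏ k, x k ^ α k ∂μ) ≤ τ)
    (hmom3 : ∀ α : Fin m → ℕ, (∑ k, α k) = d → (∃ k, ¬ Even (α k)) →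
      ∫ x, ∏ k, x k ^ α k ∂μ = 0)
    (a : Fin m → Fin n → ℝ)
    (hunit : ∀ i, ∑ j, a i j ^ 2 = 1)
    (hdict : ∀ u : Fin n → ℝ, ∑ i, (∑ j, a i j * u j) ^ 2 ≤ σ * ∑ j, u j ^ 2) :
    ∃ S₁ S₂ : MvPolynomial (Fin n) ℝ, IsSOS S₁ ∧ IsSOS S₂ ∧
      (∀ u : Fin n → ℝ,
        (∫ x, (∑ i, x i * (∑ j, a i j * u j)) ^ d ∂μ) =
            (∑ i, (∑ j, a i j * u j) ^ d) + MvPolynomial.eval u S₁ ∧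
        (∑ i, (∑ j, a i j * u j) ^ d) + τ * σ ^ d * (d : ℝ) ^ d * (∑ j, u j ^ 2) ^ (d / 2) =
            (∫ x, (∑ i, x i * (∑ j, a i j * u j)) ^ d ∂μ) + MvPolynomial.eval u S₂) ∧
      ∀ u : Fin n → ℝ,
        (∑ i, (∑ j, a i j * u j) ^ d) ≤ (∫ x, (∑ i, x i * (∑ j, a i j * u j)) ^ d ∂μ) ∧
        (∫ x, (∑ i, x i * (∑ j, a i j * u j)) ^ d ∂μ) ≤
          (∑ i, (∑ j, a i j * u j) ^ d) + τ * σ ^ d * (d : ℝ) ^ d * (∑ j, u j ^ 2) ^ (d / 2) := by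
  classical
  obtain ⟨K, hK⟩ := hde
  have hdK : d = 2 * K := by omega
  have hK2 : d / 2 = K := by omega
  have hd0 : d ≠ 0 := by omega
  -- notation
  set V : Fin m → MvPolynomial (Fin n) ℝ := fun i => ∑ j, C (a i j) * X j with hV
  set M : (Fin m → ℕ) → ℝ := fun α => ∫ x, ∏ l, x l ^ α l ∂μ with hM
  set mlt : (Fin m → ℕ) → ℕ := fun α => Nat.multinomial Finset.univ α with hmlt
  set A : Finset (Fin m → ℕ) := Finset.piAntidiag Finset.univ d with hA
  set B : Finset (Fin m → ℕ) := Finset.piAntidiag Finset.univ K with hB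
  set spike : Fin m → (Fin m → ℕ) := fun i l => if l = i then d else 0 with hspike
  set φ : (Fin m → ℕ) → (Fin m → ℕ) := fun β l => 2 * β l with hφ
  have hmemA : ∀ α : Fin m → ℕ, α ∈ A ↔ ∑ l, α l = d := by
    intro α; simp [hA, Finset.mem_piAntidiag]
  have hmemB : ∀ β : Fin m → ℕ, β ∈ B ↔ ∑ l, β l = K := by
    intro β; simp [hB, Finset.mem_piAntidiag]
  -- spike facts
  have hspikesum : ∀ i, ∑ l, spike i l = d := by
    intro i
    simp [hspike]
  have hspikeA : ∀ i, spike i ∈ A := fun i => (hmemA _).2 (hspikesum i)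
  have hspike_inj : Function.Injective spike := by
    intro i i' h
    by_contra hne
    have := congrFun h i
    simp [hspike, hne] at this
    exact hd0 this
  have hprod_spike : ∀ (f : Fin m → ℝ) i, ∏ l, f l ^ spike i l = f i ^ d := by
    intro f i
    rw [Finset.prod_eq_single i (fun l _ hl => by simp [hspike, hl]) (by simp)]
    simp [hspike]
  have hMspike : ∀ i, M (spike i) = 1 := by
    intro i
    have : (fun x : Fin m → ℝ => ∏ l, x l ^ spike i l) = fun x => x i ^ d := by
      funext x; exact hprod_spike (fun l => x l) i
    simp only [hM]
    rw [this]
    exact hmom1 i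
  have hmltspike : ∀ i, mlt (spike i) = 1 := by
    intro i
    have hspec := Nat.multinomial_spec Finset.univ (spike i)
    have hp : ∏ l, (spike i l).factorial = d.factorial := by
      rw [Finset.prod_eq_single i (fun l _ hl => by simp [hspike, hl]) (by simp)]
      simp [hspike]
    rw [hp, hspikesum i] at hspec
    have h2 : d.factorial * Nat.multinomial Finset.univ (spike i) = d.factorial * 1 := by
      rw [hspec, mul_one]
    exact Nat.eq_of_mul_eq_mul_left (Nat.factorial_pos d) h2
  -- the first SOS polynomial
  set S₁ : MvPolynomial (Fin n) ℝ :=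
    ∑ β ∈ B.filter (fun β => ∀ i, φ β ≠ spike i),
      C ((mlt (φ β) : ℝ) * M (φ β)) * ∏ i, V i ^ (φ β i) with hS₁
  -- expansion of the integral
  have hexp : ∀ u : Fin n → ℝ,
      (∫ x, (∑ i, x i * (∑ j, a i j * u j)) ^ d ∂μ) =
        ∑ α ∈ A, (mlt α : ℝ) * M α * ∏ i, (∑ j, a i j * u j) ^ α i := by
    intro u
    set v : Fin m → ℝ := fun i => ∑ j, a i j * u j with hv
    have hpt : ∀ x : Fin m → ℝ, (∑ i, x i * v i) ^ d
        = ∑ α ∈ A, ((mlt α : ℝ) * ∏ i, v i ^ α i) * ∏ i, x i ^ α i := by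
      intro x
      rw [Finset.sum_pow_eq_sum_piAntidiag Finset.univ (fun i => x i * v i) d]
      refine Finset.sum_congr rfl fun α hα => ?_
      simp_rw [mul_pow, Finset.prod_mul_distrib]
      ring
    calc (∫ x, (∑ i, x i * v i) ^ d ∂μ)
        = ∫ x, ∑ α ∈ A, ((mlt α : ℝ) * ∏ i, v i ^ α i) * ∏ i, x i ^ α i ∂μ := by
          simp_rw [hpt]
      _ = ∑ α ∈ A, ((mlt α : ℝ) * ∏ i, v i ^ α i) * M α := by
          rw [integral_finset_sum]
          · exact Finset.sum_congr rfl fun α _ => integral_const_mul _ _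
          · intro α hα
            exact (hint α (le_of_eq ((hmemA α).1 hα))).const_mul _
      _ = ∑ α ∈ A, (mlt α : ℝ) * M α * ∏ i, v i ^ α i := by
          exact Finset.sum_congr rfl fun α _ => by ring
  have hevalS₁ : ∀ u : Fin n → ℝ, eval u S₁ =
      ∑ β ∈ B.filter (fun β => ∀ i, φ β ≠ spike i),
        (mlt (φ β) : ℝ) * M (φ β) * ∏ i, (∑ j, a i j * u j) ^ (φ β i) := by
    intro u
    rw [hS₁, map_sum]
    refine Finset.sum_congr rfl fun β _ => ?_
    rw [map_mul, eval_C, map_prod]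
    simp [hV]
  have hhalf : ∀ α : Fin m → ℕ, (∀ l, Even (α l)) → φ (fun l => α l / 2) = α := by
    intro α h
    funext l
    have := (h l).two_dvd
    simp only [hφ]
    omega
  have hsplit : ∀ u : Fin n → ℝ,
      ∑ α ∈ A, (mlt α : ℝ) * M α * ∏ i, (∑ j, a i j * u j) ^ α i
        = (∑ i, (∑ j, a i j * u j) ^ d) + eval u S₁ := by
    intro u
    set v : Fin m → ℝ := fun i => ∑ j, a i j * u j with hv
    set f : (Fin m → ℕ) → ℝ := fun α => (mlt α : ℝ) * M α * ∏ i, v i ^ α i with hf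
    have himg : Finset.univ.image spike ⊆ A := by
      intro α hα
      obtain ⟨i, _, rfl⟩ := Finset.mem_image.1 hα
      exact hspikeA i
    rw [← Finset.sum_sdiff himg]
    have h1 : ∑ α ∈ Finset.univ.image spike, f α = ∑ i, v i ^ d := by
      rw [Finset.sum_image (fun i _ i' _ h => hspike_inj h)]
      refine Finset.sum_congr rfl fun i _ => ?_
      show (mlt (spike i) : ℝ) * M (spike i) * ∏ l, v l ^ spike i l = v i ^ d
      rw [hmltspike i, hMspike i, hprod_spike v i]
      push_cast
      ring
    rw [h1, add_comm]
    congr 1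
    rw [← Finset.sum_filter_add_sum_filter_not (A \ Finset.univ.image spike)
      (fun α => ∀ l, Even (α l)) f]
    have hodd : ∑ α ∈ (A \ Finset.univ.image spike).filter
        (fun α => ¬ ∀ l, Even (α l)), f α = 0 := by
      refine Finset.sum_eq_zero fun α hα => ?_
      rw [Finset.mem_filter, Finset.mem_sdiff] at hα
      have hMα : M α = 0 := hmom3 α ((hmemA α).1 hα.1.1) (not_forall.1 hα.2)
      show (mlt α : ℝ) * M α * ∏ i, v i ^ α i = 0
      rw [hMα]
      ring
    rw [hodd, add_zero, hevalS₁ u]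
    refine Finset.sum_nbij' (i := fun α l => α l / 2) (j := φ) ?_ ?_ ?_ ?_ ?_
    · intro α hα
      rw [Finset.mem_filter, Finset.mem_sdiff] at hα
      obtain ⟨⟨hαA, hαimg⟩, heven⟩ := hα
      rw [Finset.mem_filter]
      constructor
      · rw [hmemB]
        show ∑ l, α l / 2 = K
        have h2 : 2 * ∑ l, α l / 2 = 2 * K := by
          rw [Finset.mul_sum]
          have : ∑ l, 2 * (α l / 2) = ∑ l, α l := by
            refine Finset.sum_congr rfl fun l _ => ?_
            have := (heven l).two_dvd
            omega
          rw [this, (hmemA α).1 hαA, hdK]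
        omega
      · intro i hcontra
        rw [hhalf α heven] at hcontra
        exact hαimg (Finset.mem_image.2 ⟨i, Finset.mem_univ i, hcontra.symm⟩)
    · intro β hβ
      rw [Finset.mem_filter] at hβ
      obtain ⟨hβB, hP⟩ := hβ
      rw [Finset.mem_filter, Finset.mem_sdiff]
      refine ⟨⟨?_, ?_⟩, ?_⟩
      · rw [hmemA]
        show ∑ l, 2 * β l = d
        rw [← Finset.mul_sum, (hmemB β).1 hβB, hdK]
      · intro hcontra
        obtain ⟨i, _, hi⟩ := Finset.mem_image.1 hcontra
        exact hP i hi.symm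
      · intro l
        exact ⟨β l, by simp [hφ]; ring⟩
    · intro α hα
      rw [Finset.mem_filter] at hα
      exact hhalf α hα.2
    · intro β hβ
      funext l
      simp only [hφ]
      omega
    · intro α hα
      rw [Finset.mem_filter] at hα
      rw [hhalf α hα.2]
  have identity1 : ∀ u : Fin n → ℝ,
      (∫ x, (∑ i, x i * (∑ j, a i j * u j)) ^ d ∂μ) =
        (∑ i, (∑ j, a i j * u j) ^ d) + eval u S₁ := fun u => (hexp u).trans (hsplit u)
  -- square structure of ∏ V ^ φ β
  have hsq_prod : ∀ β : Fin m → ℕ, ∏ i, V i ^ (φ β i) = (∏ i, V i ^ β i) ^ 2 := by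
    intro β
    rw [← Finset.prod_pow]
    refine Finset.prod_congr rfl fun i _ => ?_
    rw [← pow_mul]
    show V i ^ (2 * β i) = V i ^ (β i * 2)
    rw [Nat.mul_comm]
  have hφsum : ∀ β ∈ B, ∑ l, φ β l = d := by
    intro β hβ
    show ∑ l, 2 * β l = d
    rw [← Finset.mul_sum, (hmemB β).1 hβ, hdK]
  have hφeven : ∀ (β : Fin m → ℕ) l, Even (φ β l) := by
    intro β l
    exact ⟨β l, by show 2 * β l = β l + β l; ring⟩
  have hMbounds : ∀ β ∈ B, (∀ i, φ β ≠ spike i) → 0 ≤ M (φ β) ∧ M (φ β) ≤ τ := by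
    intro β hβ hP
    exact hmom2 (φ β) (hφsum β hβ) (hφeven β) hP
  have hS₁sos : IsSOS S₁ := by
    rw [hS₁]
    refine IsSOS.finsum _ _ fun β hβ => ?_
    rw [Finset.mem_filter] at hβ
    have hMb := hMbounds β hβ.1 hβ.2
    rw [hsq_prod β]
    exact IsSOS.const_mul (mul_nonneg (Nat.cast_nonneg _) hMb.1) (IsSOS.sq _)
  -- the second SOS polynomial
  set N : MvPolynomial (Fin n) ℝ := ∑ j, X j ^ 2 with hN
  set W : MvPolynomial (Fin n) ℝ := ∑ i, V i ^ 2 with hW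
  have hNsos : IsSOS N := IsSOS.of_sum_sq _ _
  have hWsos : IsSOS W := IsSOS.of_sum_sq _ _
  have hquadsos : IsSOS (C σ * N - W) := by
    rw [hN, hW, hV]
    exact exists_sos_quadratic σ a hdict
  set P₁ : MvPolynomial (Fin n) ℝ := C (τ * (σ ^ d - σ ^ K) * (d : ℝ) ^ d) * N ^ K with hP₁
  set G : MvPolynomial (Fin n) ℝ := ∑ i ∈ Finset.range K, (C σ * N) ^ i * W ^ (K - 1 - i) with hG
  set P₂ : MvPolynomial (Fin n) ℝ := C (τ * (d : ℝ) ^ d) * (G * (C σ * N - W)) with hP₂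
  set P₃ : MvPolynomial (Fin n) ℝ :=
    ∑ β ∈ B, C (τ * (d : ℝ) ^ d * (mlt β : ℝ) -
        (if ∀ i, φ β ≠ spike i then (mlt (φ β) : ℝ) * M (φ β) else 0)) *
      ∏ i, V i ^ (φ β i) with hP₃
  set S₂ : MvPolynomial (Fin n) ℝ := P₁ + P₂ + P₃ with hS₂
  have hσ0 : (0:ℝ) ≤ σ := le_trans zero_le_one hσ
  have hP₁sos : IsSOS P₁ := by
    refine IsSOS.const_mul ?_ (hNsos.pow K)
    have hKd : K ≤ d := by omega
    have h3 : σ ^ K ≤ σ ^ d := pow_le_pow_right₀ hσ hKd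
    have hdd : (0:ℝ) ≤ (d:ℝ) ^ d := by positivity
    have h4 : (0:ℝ) ≤ τ * (σ ^ d - σ ^ K) := mul_nonneg hτ0.le (by linarith)
    exact mul_nonneg h4 hdd
  have hGsos : IsSOS G := by
    refine IsSOS.finsum _ _ fun i _ => ?_
    exact ((IsSOS.const_mul hσ0 hNsos).pow i).mul (hWsos.pow _)
  have hP₂sos : IsSOS P₂ := IsSOS.const_mul (by positivity) (hGsos.mul hquadsos)
  have hmltφle : ∀ β ∈ B, (mlt (φ β) : ℝ) ≤ (d:ℝ) ^ d := by
    intro β hβ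
    have hdvd : mlt (φ β) ∣ Nat.factorial d := by
      refine ⟨∏ l, (φ β l).factorial, ?_⟩
      rw [mul_comm, ← hφsum β hβ]
      exact (Nat.multinomial_spec Finset.univ (φ β)).symm
    have h1 : mlt (φ β) ≤ Nat.factorial d := Nat.le_of_dvd (Nat.factorial_pos d) hdvd
    have h2 : Nat.factorial d ≤ d ^ d := Nat.factorial_le_pow d
    exact_mod_cast le_trans h1 h2
  have hP₃sos : IsSOS P₃ := by
    rw [hP₃]
    refine IsSOS.finsum _ _ fun β hβ => ?_
    rw [hsq_prod β]
    refine IsSOS.const_mul ?_ (IsSOS.sq _)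
    have hmlt1 : (1:ℝ) ≤ (mlt β : ℝ) := by
      exact_mod_cast Nat.succ_le_of_lt (Nat.multinomial_pos Finset.univ β)
    by_cases hP : ∀ i, φ β ≠ spike i
    · rw [if_pos hP]
      have hMb := hMbounds β hβ hP
      have h1 : (mlt (φ β) : ℝ) * M (φ β) ≤ (d:ℝ) ^ d * τ := by
        refine mul_le_mul (hmltφle β hβ) hMb.2 hMb.1 (by positivity)
      have h2 : τ * (d:ℝ) ^ d * 1 ≤ τ * (d:ℝ) ^ d * (mlt β : ℝ) := by
        refine mul_le_mul_of_nonneg_left hmlt1 (by positivity)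
      linarith
    · rw [if_neg hP]
      have : (0:ℝ) ≤ τ * (d:ℝ) ^ d * (mlt β : ℝ) := by positivity
      linarith
  have hS₂sos : IsSOS S₂ := (hP₁sos.add hP₂sos).add hP₃sos
  -- evaluations
  have hevalN : ∀ u : Fin n → ℝ, eval u N = ∑ j, u j ^ 2 := by
    intro u; simp [hN]
  have hevalW : ∀ u : Fin n → ℝ, eval u W = ∑ i, (∑ j, a i j * u j) ^ 2 := by
    intro u; simp [hW, hV]
  have hevalVp : ∀ (u : Fin n → ℝ) (α : Fin m → ℕ),
      eval u (∏ i, V i ^ α i) = ∏ i, (∑ j, a i j * u j) ^ α i := by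
    intro u α
    rw [map_prod]
    simp [hV]
  have hgeom : G * (C σ * N - W) = (C σ * N) ^ K - W ^ K := geom_sum₂_mul _ _ K
  have hpowsum : ∀ u : Fin n → ℝ,
      (∑ i, (∑ j, a i j * u j) ^ 2) ^ K
        = ∑ β ∈ B, (mlt β : ℝ) * ∏ i, (∑ j, a i j * u j) ^ (φ β i) := by
    intro u
    rw [Finset.sum_pow_eq_sum_piAntidiag Finset.univ (fun i => (∑ j, a i j * u j) ^ 2) K]
    refine Finset.sum_congr rfl fun β _ => ?_
    congr 1
    refine Finset.prod_congr rfl fun i _ => ?_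
    rw [← pow_mul]
  have heval₂ : ∀ u : Fin n → ℝ, eval u S₂
      = τ * σ ^ d * (d:ℝ) ^ d * (∑ j, u j ^ 2) ^ K - eval u S₁ := by
    intro u
    have e1 : eval u P₁ = τ * (σ ^ d - σ ^ K) * (d:ℝ) ^ d * (∑ j, u j ^ 2) ^ K := by
      rw [hP₁, map_mul, eval_C, map_pow, hevalN]
    have e2 : eval u P₂ = τ * (d:ℝ) ^ d *
        (σ ^ K * (∑ j, u j ^ 2) ^ K - (∑ i, (∑ j, a i j * u j) ^ 2) ^ K) := by
      rw [hP₂, hgeom, map_mul, eval_C, map_sub, map_pow, map_pow, map_mul, eval_C, hevalN, hevalW,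
        mul_pow]
    have e3 : eval u P₃ = τ * (d:ℝ) ^ d * (∑ i, (∑ j, a i j * u j) ^ 2) ^ K - eval u S₁ := by
      rw [hP₃, map_sum]
      have : ∀ β ∈ B, eval u (C (τ * (d : ℝ) ^ d * (mlt β : ℝ) -
          (if ∀ i, φ β ≠ spike i then (mlt (φ β) : ℝ) * M (φ β) else 0)) * ∏ i, V i ^ (φ β i))
          = τ * (d:ℝ) ^ d * ((mlt β : ℝ) * ∏ i, (∑ j, a i j * u j) ^ (φ β i))
            - (if ∀ i, φ β ≠ spike i then (mlt (φ β) : ℝ) * M (φ β) *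
                ∏ i, (∑ j, a i j * u j) ^ (φ β i) else 0) := by
        intro β _
        rw [map_mul, eval_C, hevalVp]
        by_cases hP : ∀ i, φ β ≠ spike i
        · rw [if_pos hP, if_pos hP]; ring
        · rw [if_neg hP, if_neg hP]; ring
      rw [Finset.sum_congr rfl this, Finset.sum_sub_distrib]
      congr 1
      · rw [← Finset.mul_sum, hpowsum u]
      · rw [hevalS₁ u, Finset.sum_filter]
    rw [hS₂, map_add, map_add, e1, e2, e3]
    ring
  -- final assembly
  refine ⟨S₁, S₂, hS₁sos, hS₂sos, fun u => ⟨identity1 u, ?_⟩, fun u => ⟨?_, ?_⟩⟩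
  · rw [identity1 u, heval₂ u, hK2]
    ring
  · have h := hS₁sos.eval_nonneg u
    rw [identity1 u]
    linarith
  · have h1 := hS₂sos.eval_nonneg u
    have h2 := heval₂ u
    rw [identity1 u, hK2]
    linarith
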